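/- Let a = Σᵢ aᵢ(z)λⁱ ∈ ℂ((z))[[λ]] satisfy a(z,0) ∈ ℂ[[z]]. Let Y be the set of all r ∈ ℂ((z))[[λ]] such that (i) r(z,0) ∈ ℂ[[z]] is a unit of ℂ[[z]], and (ii) a' := a + λ·r⁻¹·(dr/dz) satisfies z·a' ∈ ℂ[[z,λ]] and res_{z=0} a' = −λ/2. Then: (1) any two elements of Y differ by multiplication by a unit of ℂ[[z,λ]], so Y is either empty or a single orbit under the multiplicative action of the units of ℂ[[z,λ]]; (2) Y is nonempty if and only if z·a₁(z) ∈ ℂ[[z]] and res_{z=0} a = −λ/2, where a₁ is the coefficient of λ in a. -/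

import Mathlib

open PowerSeries

noncomputable section

/-- `K = ℂ((z))`, the field of formal Laurent series. -/
abbrev K : Type := LaurentSeries ℂ

/-- The formal derivative `d/dz` on Laurent series. -/
def lD (f : K) : K where
  coeff n := ((n : ℂ) + 1) * f.coeff (n + 1)
  isPWO_support' := by
    apply Set.IsPWO.mono ((f.isPWO_support).image_of_monotone
      (f := fun m : ℤ => m - 1) (fun a b hab => by simpa using hab))
    intro n hn
    refine ⟨n + 1, ?_, by ring⟩
    intro h0
    apply hn
    simp [h0]

/-- `ℂ[[z]]` viewed as a subring of `ℂ((z))`. -/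
def Oz : Subring K := (HahnSeries.ofPowerSeries ℤ ℂ).range

/-- `h ∈ ℂ[[z]]` has a simple zero at `z = 0`. -/
def SimpleZero (h : PowerSeries ℂ) : Prop :=
  PowerSeries.coeff (R := ℂ) 0 h = 0 ∧ PowerSeries.coeff (R := ℂ) 1 h ≠ 0

/-- `K̂ = ℂ((z))[[λ]]`, formal power series in `λ` with Laurent series coefficients. -/
abbrev Khat : Type := PowerSeries K

/-- The `λ`-coefficientwise formal derivative `d/dz` on `ℂ((z))[[λ]]`. -/
def pD (F : Khat) : Khat := PowerSeries.mk fun i => lD (PowerSeries.coeff (R := K) i F)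

/-- `F ∈ ℂ[[z,λ]]`: every `λ`-coefficient of `F` lies in `ℂ[[z]]`. -/
def MemOhat (F : Khat) : Prop := ∀ i, PowerSeries.coeff (R := K) i F ∈ Oz

/-- The `λ`-gauge transform `Gauge_λ(A,R) = R⁻¹AR + λ·R⁻¹·(dR/dz)`. -/
def lamGauge (A R : Matrix (Fin 2) (Fin 2) Khat) : Matrix (Fin 2) (Fin 2) Khat :=
  R⁻¹ * A * R + (PowerSeries.X : Khat) • (R⁻¹ * R.map pD)

/-- The constant term in `λ`: `F(z,0)`. -/
def ev0 : Khat →+* K := PowerSeries.constantCoeff (R := K)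

/-- The residue of a Laurent series: the coefficient of `z⁻¹`. -/
def res (f : K) : ℂ := f.coeff (-1)

/-- The residue of an element of `ℂ((z))[[λ]]`, an element of `ℂ[[λ]]`. -/
def resHat (F : Khat) : PowerSeries ℂ := PowerSeries.mk fun i => res (PowerSeries.coeff (R := K) i F)

/-- The Laurent series `z`. -/
def zK : K := HahnSeries.ofPowerSeries ℤ ℂ PowerSeries.X

/-- `-λ/2` as an element of `ℂ[[λ]]`. -/
def negHalfLam : PowerSeries ℂ := -(PowerSeries.C (R := ℂ) (1 / 2) * PowerSeries.X)

-- ## Section A : basic lemmas on lD and Oz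

lemma lD_coeff (f : K) (n : ℤ) : (lD f).coeff n = ((n:ℂ)+1) * f.coeff (n+1) := rfl

lemma lD_add (f g : K) : lD (f + g) = lD f + lD g := by
  ext n; simp [lD_coeff, HahnSeries.coeff_add]; ring

lemma lD_zero : lD 0 = 0 := by ext n; simp [lD_coeff]

/-- `lD` as an additive monoid hom. -/
def lDh : K →+ K := AddMonoidHom.mk' lD lD_add

lemma lDh_apply (f : K) : lDh f = lD f := rfl

lemma lD_neg (f : K) : lD (-f) = - lD f := map_neg lDh f

lemma lD_sub (f g : K) : lD (f - g) = lD f - lD g := map_sub lDh f g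

lemma res_lD (f : K) : res (lD f) = 0 := by simp [res, lD_coeff]

lemma single_mul_coeff (b : ℤ) (r : ℂ) (f : K) (n : ℤ) :
    (HahnSeries.single b r * f).coeff n = r * f.coeff (n - b) := by
  have := HahnSeries.coeff_single_mul_add (r := r) (x := f) (a := n - b) (b := b)
  rwa [sub_add_cancel] at this

lemma lD_single (a : ℤ) (c : ℂ) :
    lD (HahnSeries.single a c) = HahnSeries.single (a-1) ((a:ℂ) * c) := by
  ext n
  rw [lD_coeff, HahnSeries.coeff_single, HahnSeries.coeff_single]
  by_cases h : n = a - 1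
  · subst h
    rw [if_pos (by omega), if_pos rfl]
    push_cast
    ring
  · rw [if_neg (by omega), if_neg h, mul_zero]

lemma lD_one : lD 1 = 0 := by
  rw [← HahnSeries.single_zero_one, lD_single]
  simp

lemma lD_single_one_mul (a : ℤ) (f : K) :
    lD (HahnSeries.single a (1:ℂ) * f)
      = HahnSeries.single (a-1) ((a:ℂ)) * f + HahnSeries.single a (1:ℂ) * lD f := by
  ext n
  rw [HahnSeries.coeff_add, lD_coeff, single_mul_coeff, single_mul_coeff, single_mul_coeff,
    lD_coeff, one_mul, one_mul]
  have e1 : n + 1 - a = n - (a-1) := by ring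
  have e2 : n - a + 1 = n - (a-1) := by ring
  rw [e1, e2]
  push_cast
  ring

lemma mem_Oz_iff (f : K) : f ∈ Oz ↔ ∀ n < (0:ℤ), f.coeff n = 0 := by
  constructor
  · rintro ⟨F, rfl⟩ n hn
    rw [HahnSeries.ofPowerSeries_apply]
    apply HahnSeries.embDomain_notin_range
    rintro ⟨m, hm⟩
    have hm' : (m:ℤ) = n := hm
    omega
  · intro h
    refine ⟨PowerSeries.mk fun m => f.coeff m, ?_⟩
    ext n
    rcases le_or_gt 0 n with hn | hn
    · lift n to ℕ using hn
      rw [HahnSeries.ofPowerSeries_apply_coeff]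
      simp
    · rw [h n hn, HahnSeries.ofPowerSeries_apply]
      apply HahnSeries.embDomain_notin_range
      rintro ⟨m, hm⟩
      have hm' : (m:ℤ) = n := hm
      omega

lemma Oz_coeff_eq_zero {f : K} (hf : f ∈ Oz) {n : ℤ} (hn : n < 0) : f.coeff n = 0 :=
  (mem_Oz_iff f).1 hf n hn

-- ## Section B : shifting, lD on power series, Leibniz rule

lemma single_add' (a : ℤ) (r s : ℂ) :
    HahnSeries.single a (r + s) = HahnSeries.single a r + HahnSeries.single a s := by
  ext n
  rw [HahnSeries.coeff_add, HahnSeries.coeff_single, HahnSeries.coeff_single,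
    HahnSeries.coeff_single]
  split_ifs <;> simp

lemma exists_shift (f : K) : ∃ (m : ℕ) (F : PowerSeries ℂ),
    f = HahnSeries.single (-(m:ℤ)) 1 * HahnSeries.ofPowerSeries ℤ ℂ F := by
  by_cases hf : f = 0
  · exact ⟨0, 0, by simp [hf]⟩
  · have hsupp : f.support.Nonempty := HahnSeries.support_nonempty_iff.2 hf
    set b := f.isWF_support.min hsupp with hb
    set m : ℕ := (-b).toNat with hmdef
    have hm : b + (m:ℤ) ≥ 0 := by
      have : (m:ℤ) ≥ -b := Int.self_le_toNat _
      omega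
    have hOz : HahnSeries.single (m:ℤ) 1 * f ∈ Oz := by
      rw [mem_Oz_iff]
      intro n hn
      rw [single_mul_coeff, one_mul]
      by_contra hc
      have hmem : n - (m:ℤ) ∈ f.support := hc
      have := f.isWF_support.not_lt_min hsupp hmem
      omega
    obtain ⟨F, hF⟩ := hOz
    refine ⟨m, F, ?_⟩
    rw [hF, ← mul_assoc, HahnSeries.single_mul_single, one_mul]
    norm_num

lemma lD_ofPS (F : PowerSeries ℂ) :
    lD (HahnSeries.ofPowerSeries ℤ ℂ F)
      = HahnSeries.ofPowerSeries ℤ ℂ (PowerSeries.derivativeFun F) := by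
  ext n
  rcases le_or_gt 0 n with hn | hn
  · lift n to ℕ using hn
    rw [lD_coeff, HahnSeries.ofPowerSeries_apply_coeff]
    have : ((n:ℤ) + 1) = ((n+1 : ℕ) : ℤ) := by push_cast; ring
    rw [this, HahnSeries.ofPowerSeries_apply_coeff, PowerSeries.derivativeFun]
    show _ = PowerSeries.coeff n (PowerSeries.derivative ℂ F)
    rw [PowerSeries.coeff_derivative]
    push_cast
    ring
  · rw [Oz_coeff_eq_zero ⟨_, rfl⟩ hn, lD_coeff]
    rcases eq_or_ne n (-1) with h | h
    · rw [h]; norm_num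
    · rw [Oz_coeff_eq_zero ⟨F, rfl⟩ (by omega : n + 1 < 0), mul_zero]

lemma lD_mul (f g : K) : lD (f * g) = f * lD g + lD f * g := by
  obtain ⟨m, F, rfl⟩ := exists_shift f
  obtain ⟨k, G, rfl⟩ := exists_shift g
  have key : ∀ (j : ℕ) (P : PowerSeries ℂ),
      lD (HahnSeries.single (-(j:ℤ)) 1 * HahnSeries.ofPowerSeries ℤ ℂ P)
        = HahnSeries.single (-(j:ℤ)-1) ((-(j:ℤ) : ℂ)) * HahnSeries.ofPowerSeries ℤ ℂ P
          + HahnSeries.single (-(j:ℤ)) 1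
              * HahnSeries.ofPowerSeries ℤ ℂ (PowerSeries.derivativeFun P) := by
    intro j P
    rw [lD_single_one_mul, lD_ofPS]
    norm_num
  have hprod : (HahnSeries.single (-(m:ℤ)) 1 * HahnSeries.ofPowerSeries ℤ ℂ F)
      * (HahnSeries.single (-(k:ℤ)) 1 * HahnSeries.ofPowerSeries ℤ ℂ G)
      = HahnSeries.single (-((m+k : ℕ):ℤ)) 1 * HahnSeries.ofPowerSeries ℤ ℂ (F * G) := by
    rw [mul_mul_mul_comm, HahnSeries.single_mul_single, one_mul, map_mul]
    push_cast
    ring_nf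
  rw [hprod, key, key, key]
  rw [PowerSeries.derivativeFun_mul, smul_eq_mul, smul_eq_mul, map_add, map_mul, map_mul, map_mul]
  have hsing : HahnSeries.single (-((m+k:ℕ):ℤ)-1) ((-((m+k:ℕ):ℤ)) : ℂ)
      = HahnSeries.single (-(m:ℤ)) 1 * HahnSeries.single (-(k:ℤ)-1) ((-(k:ℤ)):ℂ)
        + HahnSeries.single (-(k:ℤ)) 1 * HahnSeries.single (-(m:ℤ)-1) ((-(m:ℤ)):ℂ) := by
    rw [HahnSeries.single_mul_single, HahnSeries.single_mul_single, one_mul, one_mul]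
    have e1 : -(m:ℤ) + (-(k:ℤ)-1) = -((m+k:ℕ):ℤ)-1 := by push_cast; ring
    have e2 : -(k:ℤ) + (-(m:ℤ)-1) = -((m+k:ℕ):ℤ)-1 := by push_cast; ring
    rw [e1, e2, ← single_add']
    congr 1
    push_cast
    ring
  have hsing2 : HahnSeries.single (-((m+k:ℕ):ℤ)) (1:ℂ)
      = HahnSeries.single (-(m:ℤ)) 1 * HahnSeries.single (-(k:ℤ)) 1 := by
    rw [HahnSeries.single_mul_single, one_mul]
    congr 1
    push_cast
    ring
  rw [hsing, hsing2]
  ring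

-- ## Section C : integration and Oz lemmas

def J (f : K) : K where
  coeff n := if n = 0 then 0 else f.coeff (n - 1) / (n : ℂ)
  isPWO_support' := by
    apply Set.IsPWO.mono ((f.isPWO_support).image_of_monotone
      (f := fun m : ℤ => m + 1) (fun a b hab => by simpa using hab))
    intro n hn
    refine ⟨n - 1, ?_, by ring⟩
    intro h0
    apply hn
    simp [h0]

lemma J_coeff (f : K) (n : ℤ) :
    (J f).coeff n = if n = 0 then 0 else f.coeff (n - 1) / (n : ℂ) := rfl

lemma lD_J {f : K} (h : res f = 0) : lD (J f) = f := by
  ext n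
  rw [lD_coeff, J_coeff]
  rcases eq_or_ne n (-1) with hn | hn
  · subst hn
    rw [if_pos (by norm_num), mul_zero]
    exact h.symm
  · rw [if_neg (by omega)]
    have hne : ((n : ℂ) + 1) ≠ 0 := by
      have e : ((n : ℂ) + 1) = ((n + 1 : ℤ) : ℂ) := by push_cast; ring
      rw [e]
      exact Int.cast_ne_zero.mpr (by omega)
    rw [show n + 1 - 1 = n by ring]
    push_cast
    field_simp

lemma J_zero : J 0 = 0 := by
  ext n; rw [J_coeff]; simp

lemma mem_Oz_of_lD {f : K} (h : lD f ∈ Oz) : f ∈ Oz := by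
  rw [mem_Oz_iff]
  intro n hn
  have h1 : (lD f).coeff (n - 1) = 0 := Oz_coeff_eq_zero h (by omega)
  rw [lD_coeff, show n - 1 + 1 = n by ring] at h1
  have hne : ((n - 1 : ℤ) : ℂ) + 1 ≠ 0 := by
    have e : ((n - 1 : ℤ) : ℂ) + 1 = ((n : ℤ) : ℂ) := by push_cast; ring
    rw [e]
    exact Int.cast_ne_zero.mpr (by omega)
  exact (mul_eq_zero.1 h1).resolve_left hne

lemma zK_eq : zK = HahnSeries.single 1 1 := HahnSeries.ofPowerSeries_X

lemma zK_mul_coeff (f : K) (n : ℤ) : (zK * f).coeff n = f.coeff (n - 1) := by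
  rw [zK_eq, single_mul_coeff, one_mul]

lemma zK_mem : zK ∈ Oz := ⟨PowerSeries.X, rfl⟩

lemma mem_Oz_of_zK_mem {f : K} (h1 : zK * f ∈ Oz) (h2 : res f = 0) : f ∈ Oz := by
  rw [mem_Oz_iff]
  intro n hn
  rcases eq_or_ne n (-1) with rfl | hne
  · exact h2
  · have := Oz_coeff_eq_zero h1 (show n + 1 < 0 by omega)
    rwa [zK_mul_coeff, show n + 1 - 1 = n by ring] at this

-- ## Section D : calculus on Khat

lemma pD_coeff (F : Khat) (i : ℕ) : PowerSeries.coeff (R := K) i (pD F) = lD (PowerSeries.coeff (R := K) i F) :=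
  PowerSeries.coeff_mk _ _

lemma pD_add (F G : Khat) : pD (F + G) = pD F + pD G := by
  ext i
  rw [map_add, pD_coeff, pD_coeff, pD_coeff, map_add, lD_add]

lemma pD_sub (F G : Khat) : pD (F - G) = pD F - pD G := by
  ext i
  rw [map_sub, pD_coeff, pD_coeff, pD_coeff, map_sub, lD_sub]

lemma pD_one : pD (1 : Khat) = 0 := by
  ext i
  rw [pD_coeff, PowerSeries.coeff_one]
  split_ifs with h
  · rw [lD_one]; simp
  · rw [lD_zero]; simp

lemma lD_sum {α : Type} (s : Finset α) (f : α → K) :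
    lD (∑ x ∈ s, f x) = ∑ x ∈ s, lD (f x) := map_sum lDh f s

lemma pD_mul (F G : Khat) : pD (F * G) = F * pD G + pD F * G := by
  ext i : 1
  rw [pD_coeff, PowerSeries.coeff_mul, lD_sum, map_add, PowerSeries.coeff_mul,
    PowerSeries.coeff_mul, ← Finset.sum_add_distrib]
  exact Finset.sum_congr rfl fun p _ => by rw [lD_mul, pD_coeff, pD_coeff]

lemma pD_C (k : K) : pD (PowerSeries.C (R := K) k) = PowerSeries.C (R := K) (lD k) := by
  ext i
  rw [pD_coeff, PowerSeries.coeff_C, PowerSeries.coeff_C]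
  split_ifs with h
  · rfl
  · simp [lD_zero]

lemma pD_X : pD (PowerSeries.X : Khat) = 0 := by
  ext i
  rw [pD_coeff, PowerSeries.coeff_X]
  split_ifs with h
  · rw [lD_one]; simp
  · rw [lD_zero]; simp

lemma pD_inv (r : Khat) (hr : PowerSeries.constantCoeff (R := K) r ≠ 0) :
    pD (r⁻¹) = -(r⁻¹ * r⁻¹ * pD r) := by
  have h1 : r * r⁻¹ = 1 := PowerSeries.mul_inv_cancel r hr
  have h0 := pD_mul r r⁻¹
  rw [h1, pD_one] at h0
  calc pD r⁻¹ = r⁻¹ * r * pD r⁻¹ := by rw [mul_comm r⁻¹ r, h1, one_mul]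
    _ = r⁻¹ * (r * pD r⁻¹ + pD r * r⁻¹) - r⁻¹ * (pD r * r⁻¹) := by ring
    _ = -(r⁻¹ * r⁻¹ * pD r) := by rw [← h0]; ring

lemma res_add (f g : K) : res (f + g) = res f + res g := rfl

lemma resHat_coeff (F : Khat) (i : ℕ) :
    PowerSeries.coeff (R := ℂ) i (resHat F) = res (PowerSeries.coeff (R := K) i F) :=
  PowerSeries.coeff_mk _ _

lemma resHat_add (F G : Khat) : resHat (F + G) = resHat F + resHat G := by
  ext i
  rw [map_add, resHat_coeff, resHat_coeff, resHat_coeff, map_add, res_add]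

lemma resHat_sub (F G : Khat) : resHat (F - G) = resHat F - resHat G := by
  ext i
  rw [map_sub, resHat_coeff, resHat_coeff, resHat_coeff, map_sub]
  show ((PowerSeries.coeff (R := K) i F - PowerSeries.coeff (R := K) i G).coeff (-1) : ℂ) = _
  rw [HahnSeries.coeff_sub]
  rfl

lemma resHat_X_mul (F : Khat) : resHat (PowerSeries.X * F) = PowerSeries.X * resHat F := by
  ext i
  cases i with
  | zero =>
    rw [resHat_coeff]
    have h1 : PowerSeries.coeff (R := K) 0 (PowerSeries.X * F) = 0 := by
      rw [PowerSeries.coeff_zero_eq_constantCoeff, map_mul]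
      simp
    rw [h1]
    have h2 : PowerSeries.coeff (R := ℂ) 0 (PowerSeries.X * resHat F) = 0 := by
      rw [PowerSeries.coeff_zero_eq_constantCoeff, map_mul]
      simp
    rw [h2]
    simp [res]
  | succ i =>
    rw [resHat_coeff, PowerSeries.coeff_succ_X_mul, PowerSeries.coeff_succ_X_mul, resHat_coeff]

lemma resHat_pD (F : Khat) : resHat (pD F) = 0 := by
  ext i
  rw [resHat_coeff, pD_coeff, res_lD]
  simp

lemma resHat_C (k : K) : resHat (PowerSeries.C (R := K) k) = PowerSeries.C (R := ℂ) (res k) := by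
  ext i
  rw [resHat_coeff, PowerSeries.coeff_C, PowerSeries.coeff_C]
  split_ifs with h
  · rfl
  · simp [res]

-- ## MemOhat lemmas

lemma memOhat_add {F G : Khat} (hF : MemOhat F) (hG : MemOhat G) : MemOhat (F + G) := by
  intro i
  rw [map_add]
  exact Subring.add_mem _ (hF i) (hG i)

lemma memOhat_sub {F G : Khat} (hF : MemOhat F) (hG : MemOhat G) : MemOhat (F - G) := by
  intro i
  rw [map_sub]
  exact Subring.sub_mem _ (hF i) (hG i)

lemma memOhat_mul {F G : Khat} (hF : MemOhat F) (hG : MemOhat G) : MemOhat (F * G) := by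
  intro i
  rw [PowerSeries.coeff_mul]
  exact Subring.sum_mem _ fun p _ => Subring.mul_mem _ (hF p.1) (hG p.2)

lemma memOhat_one : MemOhat (1 : Khat) := by
  intro i
  rw [PowerSeries.coeff_one]
  split_ifs <;> simp [Subring.one_mem, Subring.zero_mem]

lemma memOhat_C {k : K} (hk : k ∈ Oz) : MemOhat (PowerSeries.C (R := K) k) := by
  intro i
  rw [PowerSeries.coeff_C]
  split_ifs <;> simp [hk, Subring.zero_mem]

-- ## Section E : truncated exponential / logarithm machinery

/-- constants `ℂ → Khat` -/
def cst : ℂ →+* Khat := (PowerSeries.C (R := K)).comp (HahnSeries.C : ℂ →+* K)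

lemma cst_apply (c : ℂ) : cst c = PowerSeries.C (R := K) (HahnSeries.single 0 c) := rfl

lemma lD_hC (c : ℂ) : lD (HahnSeries.single 0 c) = 0 := by
  rw [lD_single]; simp

lemma pD_cst_mul (c : ℂ) (F : Khat) : pD (cst c * F) = cst c * pD F := by
  rw [pD_mul, cst_apply, pD_C, lD_hC]
  simp

lemma pD_sum {α : Type} (s : Finset α) (f : α → Khat) :
    pD (∑ x ∈ s, f x) = ∑ x ∈ s, pD (f x) := by
  ext i : 1
  rw [pD_coeff, map_sum, lD_sum, map_sum]
  exact Finset.sum_congr rfl fun x _ => (pD_coeff _ _).symm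

lemma coeff_pow_zero {V : Khat} (hV : PowerSeries.constantCoeff (R := K) V = 0) {n k : ℕ}
    (h : n < k) : PowerSeries.coeff (R := K) n (V ^ k) = 0 := by
  have hd : (PowerSeries.X : Khat) ^ k ∣ V ^ k :=
    pow_dvd_pow_of_dvd (PowerSeries.X_dvd_iff.2 hV) k
  exact (PowerSeries.X_pow_dvd_iff.1 hd) n h

lemma coeff_pow_mul_zero {V : Khat} (hV : PowerSeries.constantCoeff (R := K) V = 0) (W : Khat)
    {n k : ℕ} (h : n < k) : PowerSeries.coeff (R := K) n (V ^ k * W) = 0 := by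
  rw [PowerSeries.coeff_mul]
  refine Finset.sum_eq_zero fun p hp => ?_
  have hle : p.1 ≤ n := Finset.HasAntidiagonal.antidiagonal.fst_le hp
  rw [coeff_pow_zero hV (lt_of_le_of_lt hle h), zero_mul]

lemma pD_pow (V : Khat) (k : ℕ) :
    pD (V ^ (k+1)) = (((k+1 : ℕ)) : Khat) * (V ^ k * pD V) := by
  induction k with
  | zero => simp
  | succ k ih =>
    have hp : V ^ (k+1+1) = V ^ (k+1) * V := pow_succ V (k+1)
    rw [hp, pD_mul, ih, Nat.cast_succ (k+1)]
    ring

/-- truncated functional calculus: `∑ₖ c k • Vᵏ` -/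
def tr (c : ℕ → ℂ) (V : Khat) : Khat :=
  PowerSeries.mk fun n => PowerSeries.coeff (R := K) n (∑ k ∈ Finset.range (n+1), cst (c k) * V^k)

lemma tr_coeff (c : ℕ → ℂ) (V : Khat) (n : ℕ) :
    PowerSeries.coeff (R := K) n (tr c V)
      = PowerSeries.coeff (R := K) n (∑ k ∈ Finset.range (n+1), cst (c k) * V^k) :=
  PowerSeries.coeff_mk _ _

lemma tr_coeff_eq (c : ℕ → ℂ) {V : Khat} (hV : PowerSeries.constantCoeff (R := K) V = 0)
    {n m : ℕ} (h : n < m) :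
    PowerSeries.coeff (R := K) n (tr c V)
      = PowerSeries.coeff (R := K) n (∑ k ∈ Finset.range m, cst (c k) * V^k) := by
  rw [tr_coeff, map_sum, map_sum]
  refine Finset.sum_subset (Finset.range_subset_range.2 (by omega)) fun k hk hnk => ?_
  have hkn : n < k := by
    simp only [Finset.mem_range] at hk hnk
    omega
  rw [cst_apply, PowerSeries.coeff_C_mul, coeff_pow_zero hV hkn, mul_zero]

lemma factorial_cast_succ (j : ℕ) :
    (((j+1).factorial : ℂ))⁻¹ * ((j+1 : ℕ) : ℂ) = ((j.factorial : ℂ))⁻¹ := by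
  have h : ((j+1).factorial : ℂ) = ((j+1 : ℕ) : ℂ) * (j.factorial : ℂ) := by
    rw [Nat.factorial_succ]
    push_cast
    ring
  have h1 : ((j+1 : ℕ) : ℂ) ≠ 0 := Nat.cast_ne_zero.2 (by omega)
  rw [h, mul_inv, mul_comm (((j+1 : ℕ) : ℂ))⁻¹ _, mul_assoc, inv_mul_cancel₀ h1, mul_one]

lemma key_exp {V : Khat} (m : ℕ) :
    pD (∑ k ∈ Finset.range (m+1), cst ((k.factorial : ℂ)⁻¹) * V^k)
      = (∑ k ∈ Finset.range m, cst ((k.factorial : ℂ)⁻¹) * V^k) * pD V := by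
  rw [pD_sum, Finset.sum_range_succ' _ m, Finset.sum_mul]
  have h0 : pD (cst ((Nat.factorial 0 : ℂ)⁻¹) * V^0) = 0 := by
    rw [pow_zero, pD_cst_mul, pD_one, mul_zero]
  rw [h0, add_zero]
  refine Finset.sum_congr rfl fun j _ => ?_
  rw [pD_cst_mul, pD_pow]
  have e : cst (((j+1).factorial : ℂ)⁻¹) * (((j+1 : ℕ)) : Khat)
      = cst ((j.factorial : ℂ)⁻¹) := by
    rw [← map_natCast cst (j+1), ← map_mul]
    exact congrArg cst (factorial_cast_succ j)
  calc cst (((j+1).factorial : ℂ)⁻¹) * ((((j+1 : ℕ)) : Khat) * (V^j * pD V))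
      = (cst (((j+1).factorial : ℂ)⁻¹) * (((j+1 : ℕ)) : Khat)) * (V^j * pD V) := by ring
    _ = cst ((j.factorial : ℂ)⁻¹) * V^j * pD V := by rw [e]; ring

/-- coefficients of the logarithm series -/
def lc (k : ℕ) : ℂ := if k = 0 then 0 else (-1)^(k+1) / k

lemma telescope (V : Khat) (m : ℕ) :
    (1 + V) * (∑ j ∈ Finset.range m, cst ((-1 : ℂ)^j) * V^j)
      = 1 - cst ((-1:ℂ)^m) * V^m := by
  induction m with
  | zero => simp
  | succ m ih =>
    rw [Finset.sum_range_succ, mul_add, ih]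
    have h : cst ((-1:ℂ)^(m+1)) = - cst ((-1:ℂ)^m) := by
      rw [pow_succ, map_mul, map_neg, map_one]
      ring
    rw [h, pow_succ]
    ring

lemma pD_zero : pD (0 : Khat) = 0 := by
  ext i : 1
  rw [pD_coeff, map_zero, lD_zero]

lemma key_log {V : Khat} (m : ℕ) :
    (1 + V) * pD (∑ k ∈ Finset.range (m+1), cst (lc k) * V^k)
      = pD V - cst ((-1:ℂ)^m) * (V^m * pD V) := by
  have hsum : pD (∑ k ∈ Finset.range (m+1), cst (lc k) * V^k)
      = (∑ j ∈ Finset.range m, cst ((-1 : ℂ)^j) * V^j) * pD V := by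
    rw [pD_sum, Finset.sum_range_succ' _ m, Finset.sum_mul]
    have h0 : pD (cst (lc 0) * V^0) = 0 := by
      rw [show lc 0 = 0 from rfl, map_zero, zero_mul, pD_zero]
    rw [h0, add_zero]
    refine Finset.sum_congr rfl fun j _ => ?_
    rw [pD_cst_mul, pD_pow]
    have hid : lc (j+1) * ((j+1 : ℕ) : ℂ) = (-1:ℂ)^j := by
      have h1 : ((j+1 : ℕ) : ℂ) ≠ 0 := Nat.cast_ne_zero.2 (by omega)
      simp only [lc, if_neg (Nat.succ_ne_zero j)]
      rw [div_mul_cancel₀ _ h1]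
      ring
    have e : cst (lc (j+1)) * (((j+1 : ℕ)) : Khat) = cst ((-1:ℂ)^j) := by
      rw [← map_natCast cst (j+1), ← map_mul]
      exact congrArg cst hid
    calc cst (lc (j+1)) * ((((j+1 : ℕ)) : Khat) * (V^j * pD V))
        = (cst (lc (j+1)) * (((j+1 : ℕ)) : Khat)) * (V^j * pD V) := by ring
      _ = cst ((-1:ℂ)^j) * V^j * pD V := by rw [e]; ring
  rw [hsum, ← mul_assoc, telescope]
  ring

-- ## Section F : exp and log

lemma exp_spec {T : Khat} (hT : PowerSeries.constantCoeff (R := K) T = 0) :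
    ∃ r : Khat, PowerSeries.constantCoeff (R := K) r = 1 ∧ pD r = r * pD T := by
  refine ⟨tr (fun k => (k.factorial : ℂ)⁻¹) T, ?_, ?_⟩
  · rw [← PowerSeries.coeff_zero_eq_constantCoeff_apply, tr_coeff, Finset.sum_range_one,
      pow_zero, Nat.factorial_zero, Nat.cast_one, inv_one, map_one, one_mul,
      PowerSeries.coeff_zero_eq_constantCoeff_apply, map_one]
  · ext n : 1
    rw [pD_coeff, tr_coeff_eq _ hT (show n < n+2 by omega), ← pD_coeff,
      key_exp (n+1), PowerSeries.coeff_mul, PowerSeries.coeff_mul]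
    refine Finset.sum_congr rfl fun p hp => ?_
    have hlt : p.1 < n+1 := Nat.lt_succ_of_le (Finset.HasAntidiagonal.antidiagonal.fst_le hp)
    rw [tr_coeff_eq _ hT hlt]

lemma log_spec {u : Khat} (hu : PowerSeries.constantCoeff (R := K) u = 1) :
    ∃ L : Khat, u * pD L = pD u := by
  set V : Khat := u - 1 with hVdef
  have hV0 : PowerSeries.constantCoeff (R := K) V = 0 := by
    rw [hVdef, map_sub, hu, map_one, sub_self]
  have hu' : u = 1 + V := by rw [hVdef]; ring
  have hpDu : pD V = pD u := by rw [hVdef, pD_sub, pD_one, sub_zero]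
  refine ⟨tr lc V, ?_⟩
  ext n : 1
  have h1 : PowerSeries.coeff (R := K) n (u * pD (tr lc V))
      = PowerSeries.coeff (R := K) n (u * pD (∑ k ∈ Finset.range (n+2), cst (lc k) * V^k)) := by
    rw [PowerSeries.coeff_mul, PowerSeries.coeff_mul]
    refine Finset.sum_congr rfl fun p hp => ?_
    have hp2 : p.2 < n+2 := Nat.lt_succ_of_lt (Nat.lt_succ_of_le (Finset.HasAntidiagonal.antidiagonal.snd_le hp))
    rw [pD_coeff, tr_coeff_eq lc hV0 hp2, ← pD_coeff]
  have h2 : u * pD (∑ k ∈ Finset.range (n+2), cst (lc k) * V^k)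
      = pD V - cst ((-1:ℂ)^(n+1)) * (V^(n+1) * pD V) := by
    rw [hu']
    exact key_log (n+1)
  rw [h1, h2, map_sub, cst_apply, PowerSeries.coeff_C_mul,
    coeff_pow_mul_zero hV0 _ (show n < n+1 by omega), mul_zero, sub_zero, hpDu]

-- ## Section G : logarithmic derivative lemmas

lemma res_of_mem_Oz {f : K} (h : f ∈ Oz) : res f = 0 :=
  Oz_coeff_eq_zero h (by norm_num)

lemma constantCoeff_pD (r : Khat) :
    PowerSeries.constantCoeff (R := K) (pD r) = lD (PowerSeries.constantCoeff (R := K) r) := by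
  rw [← PowerSeries.coeff_zero_eq_constantCoeff_apply, pD_coeff,
    PowerSeries.coeff_zero_eq_constantCoeff_apply]

lemma constantCoeff_logderiv {r : Khat} (hr0 : PowerSeries.constantCoeff (R := K) r ≠ 0) :
    PowerSeries.constantCoeff (R := K) (r⁻¹ * pD r)
      = (PowerSeries.constantCoeff (R := K) r)⁻¹ * lD (PowerSeries.constantCoeff (R := K) r) := by
  rw [map_mul, PowerSeries.constantCoeff_inv, constantCoeff_pD]

lemma ofPS_unit_inv {g : PowerSeries ℂ} (gu : (PowerSeries ℂ)ˣ) (hgu : (gu : PowerSeries ℂ) = g) :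
    (HahnSeries.ofPowerSeries ℤ ℂ g)⁻¹ = HahnSeries.ofPowerSeries ℤ ℂ (↑gu⁻¹ : PowerSeries ℂ) := by
  apply inv_eq_of_mul_eq_one_right
  rw [← map_mul, ← hgu, Units.mul_inv, map_one]

lemma ofPS_ne_zero {g : PowerSeries ℂ} (hg : IsUnit g) :
    HahnSeries.ofPowerSeries ℤ ℂ g ≠ 0 := by
  intro hc
  have : g = 0 := HahnSeries.ofPowerSeries_injective (by rw [hc, map_zero])
  rw [this] at hg
  exact (by simpa using hg : IsUnit (0 : PowerSeries ℂ)).ne_zero rfl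

lemma logderiv_const_mem_Oz {g : PowerSeries ℂ} (hg : IsUnit g) :
    (HahnSeries.ofPowerSeries ℤ ℂ g)⁻¹ * lD (HahnSeries.ofPowerSeries ℤ ℂ g) ∈ Oz := by
  obtain ⟨gu, hgu⟩ := hg
  rw [ofPS_unit_inv gu hgu, lD_ofPS]
  exact Subring.mul_mem _ ⟨_, rfl⟩ ⟨_, rfl⟩

lemma resHat_logderiv {r : Khat} {g : PowerSeries ℂ}
    (hg : PowerSeries.constantCoeff (R := K) r = HahnSeries.ofPowerSeries ℤ ℂ g) (hgu : IsUnit g) :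
    resHat (r⁻¹ * pD r) = 0 := by
  obtain ⟨r0, hr0def⟩ : ∃ r0 : K, PowerSeries.constantCoeff (R := K) r = r0 := ⟨_, rfl⟩
  rw [hr0def] at hg
  have hr0 : r0 ≠ 0 := by rw [hg]; exact ofPS_ne_zero hgu
  obtain ⟨u, hu⟩ : ∃ u : Khat, u = PowerSeries.C (R := K) r0⁻¹ * r := ⟨_, rfl⟩
  have hu1 : PowerSeries.constantCoeff (R := K) u = 1 := by
    rw [hu, map_mul, PowerSeries.constantCoeff_C, hr0def, inv_mul_cancel₀ hr0]
  obtain ⟨L, hL⟩ := log_spec hu1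
  have hr : r = PowerSeries.C (R := K) r0 * u := by
    rw [hu, ← mul_assoc, ← map_mul, mul_inv_cancel₀ hr0, map_one, one_mul]
  have e1 : PowerSeries.C (R := K) r0 * PowerSeries.C (R := K) (r0⁻¹ * lD r0) = PowerSeries.C (R := K) (lD r0) := by
    rw [← map_mul, ← mul_assoc, mul_inv_cancel₀ hr0, one_mul]
  have key : r * (PowerSeries.C (R := K) (r0⁻¹ * lD r0) + pD L) = pD r := by
    calc r * (PowerSeries.C (R := K) (r0⁻¹ * lD r0) + pD L)
        = (PowerSeries.C (R := K) r0 * PowerSeries.C (R := K) (r0⁻¹ * lD r0)) * u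
            + PowerSeries.C (R := K) r0 * (u * pD L) := by rw [hr]; ring
      _ = PowerSeries.C (R := K) (lD r0) * u + PowerSeries.C (R := K) r0 * pD u := by rw [e1, hL]
      _ = pD (PowerSeries.C (R := K) r0 * u) := by rw [pD_mul, pD_C]; ring
      _ = pD r := by rw [← hr]
  have hinv : r⁻¹ * r = 1 := by
    rw [mul_comm]
    exact PowerSeries.mul_inv_cancel r (by rw [hr0def]; exact hr0)
  have hfin : r⁻¹ * pD r = PowerSeries.C (R := K) (r0⁻¹ * lD r0) + pD L := by
    rw [← key, ← mul_assoc, hinv, one_mul]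
  have hres : res (r0⁻¹ * lD r0) = 0 := by
    apply res_of_mem_Oz
    rw [hg]
    exact logderiv_const_mem_Oz hgu
  rw [hfin, resHat_add, resHat_pD, resHat_C, hres, map_zero, add_zero]

-- ## Section H : solving pD u = u * w in Ohat

lemma ohat_solve {u w : Khat} (hw : MemOhat w) (hpd : pD u = u * w)
    {u0 b : K} (hu0 : PowerSeries.constantCoeff (R := K) u = u0) (hu0m : u0 ∈ Oz) (hbm : b ∈ Oz)
    (hub : u0 * b = 1) : MemOhat u := by
  obtain ⟨w0, hw0def⟩ : ∃ w0, PowerSeries.constantCoeff (R := K) w = w0 := ⟨_, rfl⟩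
  have hw0 : w0 ∈ Oz := by
    rw [← hw0def, ← PowerSeries.coeff_zero_eq_constantCoeff_apply]
    exact hw 0
  have hlDu0 : lD u0 = u0 * w0 := by
    have h := congrArg (PowerSeries.constantCoeff (R := K)) hpd
    rwa [constantCoeff_pD, map_mul, hu0, hw0def] at h
  have h1 : u0 * lD b + (u0 * w0) * b = 0 := by
    rw [← hlDu0]
    have : lD (u0 * b) = 0 := by rw [hub, lD_one]
    rw [lD_mul] at this
    linear_combination this
  have hlDb : lD b = -(b * w0) := by
    linear_combination b * h1 - (lD b + w0 * b) * hub
  obtain ⟨uh, huhdef⟩ : ∃ v : Khat, v = u * PowerSeries.C (R := K) b := ⟨_, rfl⟩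
  obtain ⟨wh, hwhdef⟩ : ∃ v : Khat, v = w - PowerSeries.C (R := K) w0 := ⟨_, rfl⟩
  have hwhOhat : MemOhat wh := hwhdef ▸ memOhat_sub hw (memOhat_C hw0)
  have hwh0 : PowerSeries.constantCoeff (R := K) wh = 0 := by
    rw [hwhdef, map_sub, PowerSeries.constantCoeff_C, hw0def, sub_self]
  have hpduh : pD uh = uh * wh := by
    rw [huhdef, hwhdef, pD_mul, pD_C, hlDb, hpd, map_neg, map_mul]
    ring
  have hmem : ∀ i, PowerSeries.coeff (R := K) i uh ∈ Oz := by
    intro i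
    induction i using Nat.strong_induction_on with
    | _ i ih =>
      apply mem_Oz_of_lD
      have h3 : lD (PowerSeries.coeff (R := K) i uh) = PowerSeries.coeff (R := K) i (uh * wh) := by
        rw [← pD_coeff, hpduh]
      rw [h3, PowerSeries.coeff_mul]
      refine Subring.sum_mem _ fun p hp => ?_
      rcases Nat.eq_zero_or_pos p.2 with h2 | h2
      · have hz : PowerSeries.coeff (R := K) p.2 wh = 0 := by
          rw [h2, PowerSeries.coeff_zero_eq_constantCoeff_apply, hwh0]
        rw [hz, mul_zero]
        exact Subring.zero_mem _
      · have hp1 : p.1 < i := by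
          have := Finset.HasAntidiagonal.mem_antidiagonal.1 hp
          omega
        exact Subring.mul_mem _ (ih p.1 hp1) (hwhOhat p.2)
  have hufin : u = uh * PowerSeries.C (R := K) u0 := by
    rw [huhdef, mul_assoc, ← map_mul, mul_comm b u0, hub, map_one, mul_one]
  exact hufin ▸ memOhat_mul hmem (memOhat_C hu0m)

-- ## Section I : part (1) core

lemma Y_quot (a : Khat) {r r' : Khat} {g g' : PowerSeries ℂ}
    (hgr : PowerSeries.constantCoeff (R := K) r = HahnSeries.ofPowerSeries ℤ ℂ g) (hgu : IsUnit g)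
    (hgr' : PowerSeries.constantCoeff (R := K) r' = HahnSeries.ofPowerSeries ℤ ℂ g') (hgu' : IsUnit g')
    (hm : MemOhat (PowerSeries.C (R := K) zK * (a + PowerSeries.X * (r⁻¹ * pD r))))
    (hm' : MemOhat (PowerSeries.C (R := K) zK * (a + PowerSeries.X * (r'⁻¹ * pD r'))))
    (hres : resHat (a + PowerSeries.X * (r⁻¹ * pD r)) = negHalfLam)
    (hres' : resHat (a + PowerSeries.X * (r'⁻¹ * pD r')) = negHalfLam) :
    MemOhat (r' * r⁻¹) := by
  have hr0 : PowerSeries.constantCoeff (R := K) r ≠ 0 := by rw [hgr]; exact ofPS_ne_zero hgu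
  have hr0' : PowerSeries.constantCoeff (R := K) r' ≠ 0 := by rw [hgr']; exact ofPS_ne_zero hgu'
  have hinv' : r' * r'⁻¹ = 1 := PowerSeries.mul_inv_cancel r' hr0'
  obtain ⟨w, hwdef⟩ : ∃ w : Khat, w = r'⁻¹ * pD r' - r⁻¹ * pD r := ⟨_, rfl⟩
  -- membership of z·λ·w
  have hXw_mem : MemOhat (PowerSeries.C (R := K) zK * (PowerSeries.X * w)) := by
    have he : PowerSeries.C (R := K) zK * (PowerSeries.X * w)
        = (PowerSeries.C (R := K) zK * (a + PowerSeries.X * (r'⁻¹ * pD r')))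
          - (PowerSeries.C (R := K) zK * (a + PowerSeries.X * (r⁻¹ * pD r))) := by
      rw [hwdef]; ring
    rw [he]
    exact memOhat_sub hm' hm
  -- residue of w vanishes
  have hresw : resHat w = 0 := by
    have h1 : resHat (PowerSeries.X * w) = 0 := by
      have he : PowerSeries.X * w = (a + PowerSeries.X * (r'⁻¹ * pD r'))
          - (a + PowerSeries.X * (r⁻¹ * pD r)) := by rw [hwdef]; ring
      rw [he, resHat_sub, hres', hres, sub_self]
    have h2 := resHat_X_mul w
    rw [h1] at h2
    exact ((mul_eq_zero.1 h2.symm).resolve_left PowerSeries.X_ne_zero)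
  -- w ∈ Ohat
  have hwOhat : MemOhat w := by
    intro i
    apply mem_Oz_of_zK_mem
    · have h3 := hXw_mem (i+1)
      rwa [PowerSeries.coeff_C_mul, PowerSeries.coeff_succ_X_mul] at h3
    · have := resHat_coeff w i
      rw [hresw] at this
      simpa [res] using this.symm
  -- pD (r' * r⁻¹) = (r' * r⁻¹) * w
  have hpdu : pD (r' * r⁻¹) = (r' * r⁻¹) * w := by
    rw [hwdef, pD_mul, pD_inv r hr0]
    linear_combination (-(pD r' * r⁻¹)) * hinv'
  -- constant coefficients
  obtain ⟨gu, hgud⟩ := hgu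
  obtain ⟨gu', hgud'⟩ := hgu'
  have hcc : PowerSeries.constantCoeff (R := K) (r' * r⁻¹)
      = HahnSeries.ofPowerSeries ℤ ℂ (g' * (↑gu⁻¹ : PowerSeries ℂ)) := by
    rw [map_mul, PowerSeries.constantCoeff_inv, hgr, hgr', ofPS_unit_inv gu hgud, ← map_mul]
  have hb : (HahnSeries.ofPowerSeries ℤ ℂ (g' * (↑gu⁻¹ : PowerSeries ℂ)))
      * (HahnSeries.ofPowerSeries ℤ ℂ (g * (↑gu'⁻¹ : PowerSeries ℂ))) = 1 := by
    rw [← map_mul, ← map_one (HahnSeries.ofPowerSeries ℤ ℂ)]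
    congr 1
    calc g' * (↑gu⁻¹ : PowerSeries ℂ) * (g * (↑gu'⁻¹ : PowerSeries ℂ))
        = ((↑gu' : PowerSeries ℂ) * ↑gu'⁻¹) * ((↑gu : PowerSeries ℂ) * ↑gu⁻¹) := by
          rw [hgud, hgud']; ring
      _ = 1 := by rw [Units.mul_inv, Units.mul_inv, one_mul]
  exact ohat_solve hwOhat hpdu hcc ⟨_, rfl⟩ ⟨_, rfl⟩ hb

-- ## Section J : deep polar part, part (2)

/-- minus the part of `f` of order `≤ -2`. -/
def dp (f : K) : K where
  coeff n := if n ≤ -2 then -f.coeff n else 0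
  isPWO_support' := by
    apply f.isPWO_support.mono
    intro n hn
    simp only [Function.mem_support] at hn ⊢
    intro hc
    apply hn
    rw [hc]
    simp

lemma dp_coeff (f : K) (n : ℤ) : (dp f).coeff n = if n ≤ -2 then -f.coeff n else 0 := rfl

lemma res_dp (f : K) : res (dp f) = 0 := by
  rw [res, dp_coeff, if_neg (by omega)]

lemma dp_eq_zero {f : K} (h : ∀ n ≤ (-2 : ℤ), f.coeff n = 0) : dp f = 0 := by
  ext n
  rw [dp_coeff]
  split_ifs with hn
  · rw [h n hn, neg_zero]; rfl
  · rfl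

lemma add_dp_mem {f : K} : zK * (f + dp f) ∈ Oz := by
  rw [mem_Oz_iff]
  intro n hn
  rw [zK_mul_coeff, HahnSeries.coeff_add, dp_coeff, if_pos (by omega : n - 1 ≤ -2)]
  ring

lemma part2_backward (a : Khat) (ha0 : ev0 a ∈ Oz)
    (h1 : zK * PowerSeries.coeff (R := K) 1 a ∈ Oz) (h2 : resHat a = negHalfLam) :
    ∃ r : Khat,
      ((∃ g : PowerSeries ℂ, ev0 r = HahnSeries.ofPowerSeries ℤ ℂ g ∧ IsUnit g) ∧
        MemOhat (PowerSeries.C (R := K) zK * (a + PowerSeries.X * (r⁻¹ * pD r))) ∧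
        resHat (a + PowerSeries.X * (r⁻¹ * pD r)) = negHalfLam) := by
  obtain ⟨s, hsdef⟩ : ∃ s : Khat,
      s = PowerSeries.mk fun i => dp (PowerSeries.coeff (R := K) (i+1) a) := ⟨_, rfl⟩
  have hs_coeff : ∀ i, PowerSeries.coeff (R := K) i s = dp (PowerSeries.coeff (R := K) (i+1) a) := by
    intro i
    rw [hsdef, PowerSeries.coeff_mk]
  have hress : ∀ i, res (PowerSeries.coeff (R := K) i s) = 0 := by
    intro i
    rw [hs_coeff, res_dp]
  have hs0 : PowerSeries.constantCoeff (R := K) s = 0 := by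
    rw [← PowerSeries.coeff_zero_eq_constantCoeff_apply, hs_coeff, zero_add]
    apply dp_eq_zero
    intro n hn
    have h3 := Oz_coeff_eq_zero h1 (show n + 1 < 0 by omega)
    rwa [zK_mul_coeff, show n + 1 - 1 = n by ring] at h3
  obtain ⟨T, hTdef⟩ : ∃ T : Khat, T = PowerSeries.mk fun i => J (PowerSeries.coeff (R := K) i s) :=
    ⟨_, rfl⟩
  have hpDT : pD T = s := by
    ext i : 1
    rw [pD_coeff, hTdef, PowerSeries.coeff_mk, lD_J (hress i)]
  have hT0 : PowerSeries.constantCoeff (R := K) T = 0 := by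
    rw [← PowerSeries.coeff_zero_eq_constantCoeff_apply, hTdef, PowerSeries.coeff_mk,
      PowerSeries.coeff_zero_eq_constantCoeff_apply, hs0, J_zero]
  obtain ⟨r, hr1, hrpd⟩ := exp_spec hT0
  have hrinv : r⁻¹ * r = 1 := by
    rw [mul_comm]
    exact PowerSeries.mul_inv_cancel r (by rw [hr1]; exact one_ne_zero)
  have hlog : r⁻¹ * pD r = s := by
    rw [hrpd, hpDT, ← mul_assoc, hrinv, one_mul]
  refine ⟨r, ⟨1, ?_, isUnit_one⟩, ?_, ?_⟩
  · show PowerSeries.constantCoeff (R := K) r = _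
    rw [hr1, map_one]
  · rw [hlog]
    intro i
    rw [PowerSeries.coeff_C_mul]
    cases i with
    | zero =>
      have hz : PowerSeries.coeff (R := K) 0 (PowerSeries.X * s) = 0 := by
        rw [PowerSeries.coeff_zero_eq_constantCoeff_apply, map_mul]
        simp
      rw [map_add, hz, add_zero, PowerSeries.coeff_zero_eq_constantCoeff_apply]
      exact Subring.mul_mem _ zK_mem ha0
    | succ i =>
      rw [map_add, PowerSeries.coeff_succ_X_mul, hs_coeff]
      exact add_dp_mem
  · rw [hlog, resHat_add, resHat_X_mul, h2]
    have hrs : resHat s = 0 := by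
      ext i
      rw [resHat_coeff, hress]
      simp
    rw [hrs, mul_zero, add_zero]


-- ## Section K : part (2) forward, main theorem

lemma part2_forward (a : Khat) {r : Khat} {g : PowerSeries ℂ}
    (hgr : PowerSeries.constantCoeff (R := K) r = HahnSeries.ofPowerSeries ℤ ℂ g) (hgu : IsUnit g)
    (hm : MemOhat (PowerSeries.C (R := K) zK * (a + PowerSeries.X * (r⁻¹ * pD r))))
    (hres : resHat (a + PowerSeries.X * (r⁻¹ * pD r)) = negHalfLam) :
    zK * PowerSeries.coeff (R := K) 1 a ∈ Oz ∧ resHat a = negHalfLam := by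
  have hr0 : PowerSeries.constantCoeff (R := K) r ≠ 0 := by rw [hgr]; exact ofPS_ne_zero hgu
  have hresw : resHat (r⁻¹ * pD r) = 0 := resHat_logderiv hgr hgu
  constructor
  · have hw0 : PowerSeries.constantCoeff (R := K) (r⁻¹ * pD r) ∈ Oz := by
      rw [constantCoeff_logderiv hr0, hgr]
      exact logderiv_const_mem_Oz hgu
    have hm1 := hm 1
    rw [PowerSeries.coeff_C_mul, map_add, show (1 : ℕ) = 0 + 1 from rfl,
      PowerSeries.coeff_succ_X_mul, PowerSeries.coeff_zero_eq_constantCoeff_apply] at hm1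
    have he : zK * PowerSeries.coeff (R := K) (0+1) a
        = zK * (PowerSeries.coeff (R := K) (0+1) a + PowerSeries.constantCoeff (R := K) (r⁻¹ * pD r))
          - zK * PowerSeries.constantCoeff (R := K) (r⁻¹ * pD r) := by ring
    rw [show (1 : ℕ) = 0 + 1 from rfl, he]
    exact Subring.sub_mem _ hm1 (Subring.mul_mem _ zK_mem hw0)
  · rwa [resHat_add, resHat_X_mul, hresw, mul_zero, add_zero] at hres

/-- Description of the set `Y` of admissible gauge factors `r` for
`a ∈ ℂ((z))[[λ]]` with `a(z,0) ∈ ℂ[[z]]`: (1) any two elements of `Y` differ by a unit of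
`ℂ[[z,λ]]`; (2) `Y ≠ ∅` iff `z·a₁ ∈ ℂ[[z]]` and `res a = -λ/2`. -/
theorem stmt10 (a : Khat) (ha0 : ev0 a ∈ Oz)
    (Y : Set Khat)
    (hY : ∀ r : Khat, r ∈ Y ↔
      ((∃ g : PowerSeries ℂ, ev0 r = HahnSeries.ofPowerSeries ℤ ℂ g ∧ IsUnit g) ∧
        MemOhat (PowerSeries.C (R := K) zK * (a + PowerSeries.X * (r⁻¹ * pD r))) ∧
        resHat (a + PowerSeries.X * (r⁻¹ * pD r)) = negHalfLam)) :
    (∀ r ∈ Y, ∀ r' ∈ Y, ∃ u : Khat, MemOhat u ∧ (∃ v : Khat, MemOhat v ∧ u * v = 1) ∧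
        r' = u * r) ∧
    (Y.Nonempty ↔ (zK * PowerSeries.coeff (R := K) 1 a ∈ Oz ∧ resHat a = negHalfLam)) := by
  constructor
  · intro r hr r' hr'
    rw [hY] at hr hr'
    obtain ⟨⟨g, hgr, hgu⟩, hm, hres⟩ := hr
    obtain ⟨⟨g', hgr', hgu'⟩, hm', hres'⟩ := hr'
    have hr0 : PowerSeries.constantCoeff (R := K) r ≠ 0 := by
      rw [show PowerSeries.constantCoeff (R := K) r = ev0 r from rfl, hgr]
      exact ofPS_ne_zero hgu
    have hr0' : PowerSeries.constantCoeff (R := K) r' ≠ 0 := by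
      rw [show PowerSeries.constantCoeff (R := K) r' = ev0 r' from rfl, hgr']
      exact ofPS_ne_zero hgu'
    have h1 : r * r⁻¹ = 1 := PowerSeries.mul_inv_cancel r hr0
    have h2 : r' * r'⁻¹ = 1 := PowerSeries.mul_inv_cancel r' hr0'
    refine ⟨r' * r⁻¹, Y_quot a hgr hgu hgr' hgu' hm hm' hres hres',
      ⟨r * r'⁻¹, Y_quot a hgr' hgu' hgr hgu hm' hm hres' hres, ?_⟩, ?_⟩
    · calc (r' * r⁻¹) * (r * r'⁻¹) = (r * r⁻¹) * (r' * r'⁻¹) := by ring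
        _ = 1 := by rw [h1, h2, one_mul]
    · calc r' = r' * (r * r⁻¹) := by rw [h1, mul_one]
        _ = (r' * r⁻¹) * r := by ring
  · constructor
    · rintro ⟨r, hr⟩
      rw [hY] at hr
      obtain ⟨⟨g, hgr, hgu⟩, hm, hres⟩ := hr
      exact part2_forward a hgr hgu hm hres
    · rintro ⟨h1, h2⟩
      obtain ⟨r, hr⟩ := part2_backward a ha0 h1 h2
      exact ⟨r, (hY r).2 hr⟩

end
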